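/- (Equation (18).) For every s > 0 with m f(s) < 1, the scalar series M(s) := Σ_{n≥0} s^n · (g M^n 1ᵗ) is finite and equals (1 + f(s))/(1 − m f(s)). -/

import Mathlib

open scoped ENNReal BigOperators
open Filter Topology

/-- Entrywise product of countable nonnegative matrices. -/
noncomputable def matmul (A B : ℕ → ℕ → ℝ≥0∞) : ℕ → ℕ → ℝ≥0∞ :=
  fun i j => ∑' k, A i k * B k j

/-- Entrywise powers of a countable nonnegative matrix (`matpow A 0 = I`). -/
noncomputable def matpow (A : ℕ → ℕ → ℝ≥0∞) : ℕ → ℕ → ℕ → ℝ≥0∞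
  | 0 => fun i j => if i = j then 1 else 0
  | n + 1 => matmul A (matpow A n)

/-- The mean matrix `M = H + m H 1ᵗ g`, i.e. `m_{ij} = h_{ij} + m (Σ_l h_{il}) g_j`. -/
noncomputable def meanM (H : ℕ → ℕ → ℝ≥0∞) (g : ℕ → ℝ≥0∞) (m : ℝ≥0∞) : ℕ → ℕ → ℝ≥0∞ :=
  fun i j => H i j + m * (∑' l, H i l) * g j

/-- `d_n = g H^n 1ᵗ`. -/
noncomputable def dseq (H : ℕ → ℕ → ℝ≥0∞) (g : ℕ → ℝ≥0∞) (n : ℕ) : ℝ≥0∞ :=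
  ∑' i, g i * ∑' j, matpow H n i j

/-- `f(s) = Σ_{n≥1} d_n s^n`. -/
noncomputable def fgen (H : ℕ → ℕ → ℝ≥0∞) (g : ℕ → ℝ≥0∞) (s : ℝ≥0∞) : ℝ≥0∞ :=
  ∑' n : ℕ, dseq H g (n + 1) * s ^ (n + 1)

/-- Row sums of matrix powers: `(A^n 1ᵗ)_i`. -/
noncomputable def vpow (A : ℕ → ℕ → ℝ≥0∞) (n : ℕ) (i : ℕ) : ℝ≥0∞ :=
  ∑' j, matpow A n i j

lemma vpow_zero (A : ℕ → ℕ → ℝ≥0∞) (i : ℕ) : vpow A 0 i = 1 := by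
  unfold vpow matpow
  rw [tsum_eq_single i (fun b hb => by simp [Ne.symm hb])]
  simp

lemma vpow_succ (A : ℕ → ℕ → ℝ≥0∞) (n i : ℕ) :
    vpow A (n + 1) i = ∑' k, A i k * vpow A n k := by
  show ∑' j, matmul A (matpow A n) i j = _
  unfold matmul vpow
  rw [ENNReal.tsum_comm]
  simp_rw [ENNReal.tsum_mul_left]

lemma vpow_one (A : ℕ → ℕ → ℝ≥0∞) (i : ℕ) : vpow A 1 i = ∑' k, A i k := by
  rw [vpow_succ]
  simp_rw [vpow_zero, mul_one]

lemma vpow_le_one (H : ℕ → ℕ → ℝ≥0∞) (hH : ∀ i, ∑' j, H i j ≤ 1) :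
    ∀ n i, vpow H n i ≤ 1 := by
  intro n
  induction n with
  | zero => intro i; rw [vpow_zero]
  | succ n ih =>
    intro i
    rw [vpow_succ]
    calc ∑' k, H i k * vpow H n k ≤ ∑' k, H i k * 1 :=
          ENNReal.tsum_le_tsum fun k => mul_le_mul_right (ih k) _
      _ = ∑' k, H i k := by simp
      _ ≤ 1 := hH i

/-- `a_n = g M^n 1ᵗ` for the mean matrix `M`. -/
noncomputable def aseq (H : ℕ → ℕ → ℝ≥0∞) (g : ℕ → ℝ≥0∞) (m : ℝ≥0∞) (n : ℕ) : ℝ≥0∞ :=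
  ∑' i, g i * vpow (meanM H g m) n i

lemma dseq_eq (H : ℕ → ℕ → ℝ≥0∞) (g : ℕ → ℝ≥0∞) (n : ℕ) :
    dseq H g n = ∑' i, g i * vpow H n i := rfl

lemma dseq_zero (H : ℕ → ℕ → ℝ≥0∞) (g : ℕ → ℝ≥0∞) (hg : ∑' j, g j = 1) :
    dseq H g 0 = 1 := by
  rw [dseq_eq]
  simp_rw [vpow_zero, mul_one, hg]

lemma dseq_le_one (H : ℕ → ℕ → ℝ≥0∞) (g : ℕ → ℝ≥0∞) (hH : ∀ i, ∑' j, H i j ≤ 1)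
    (hg : ∑' j, g j = 1) (n : ℕ) : dseq H g n ≤ 1 := by
  rw [dseq_eq]
  calc ∑' i, g i * vpow H n i ≤ ∑' i, g i * 1 :=
        ENNReal.tsum_le_tsum fun i => mul_le_mul_right (vpow_le_one H hH n i) _
    _ = 1 := by simp [hg]

/-- The vector identity `M^n 1 = H^n 1 + m Σ_{k<n} a_k H^{n-k} 1`. -/
lemma vpow_meanM (H : ℕ → ℕ → ℝ≥0∞) (g : ℕ → ℝ≥0∞) (m : ℝ≥0∞) :
    ∀ n i, vpow (meanM H g m) n i
      = vpow H n i + m * ∑ k ∈ Finset.range n, aseq H g m k * vpow H (n - k) i := by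
  intro n
  induction n with
  | zero => intro i; rw [vpow_zero, vpow_zero]; simp
  | succ n ih =>
    intro i
    rw [vpow_succ]
    have expand : ∀ k, meanM H g m i k * vpow (meanM H g m) n k
        = H i k * vpow (meanM H g m) n k
          + m * (∑' l, H i l) * (g k * vpow (meanM H g m) n k) := by
      intro k
      unfold meanM
      ring
    calc ∑' k, meanM H g m i k * vpow (meanM H g m) n k
        = ∑' k, (H i k * vpow (meanM H g m) n k
            + m * (∑' l, H i l) * (g k * vpow (meanM H g m) n k)) := by
          simp_rw [expand]
      _ = (∑' k, H i k * vpow (meanM H g m) n k)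
            + m * (∑' l, H i l) * aseq H g m n := by
          rw [ENNReal.tsum_add, ENNReal.tsum_mul_left]
          rfl
      _ = (∑' k, H i k * (vpow H n k
              + m * ∑ j ∈ Finset.range n, aseq H g m j * vpow H (n - j) k))
            + m * (∑' l, H i l) * aseq H g m n := by
          simp_rw [ih]
      _ = vpow H (n + 1) i
            + m * ∑ j ∈ Finset.range n, aseq H g m j * vpow H (n + 1 - j) i
            + m * aseq H g m n * vpow H 1 i := by
          simp_rw [mul_add]
          rw [ENNReal.tsum_add, ← vpow_succ]
          congr 1
          · congr 1
            have hpt : ∀ k, H i k * (m * ∑ j ∈ Finset.range n, aseq H g m j * vpow H (n - j) k)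
                = m * ∑ j ∈ Finset.range n, aseq H g m j * (H i k * vpow H (n - j) k) := by
              intro k
              rw [Finset.mul_sum, Finset.mul_sum, Finset.mul_sum]
              congr 1
              ext j
              ring
            simp_rw [hpt]
            rw [ENNReal.tsum_mul_left]
            congr 1
            rw [Summable.tsum_finsetSum (fun j _ => ENNReal.summable)]
            apply Finset.sum_congr rfl
            intro j hj
            simp only [Finset.mem_range] at hj
            rw [ENNReal.tsum_mul_left, ← vpow_succ]
            congr 2
            omega
          · rw [vpow_one]
            ring
      _ = vpow H (n + 1) i
            + m * ∑ k ∈ Finset.range (n + 1), aseq H g m k * vpow H (n + 1 - k) i := by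
          rw [Finset.sum_range_succ, mul_add, add_assoc]
          congr 2
          simp
          ring

/-- The renewal recursion `a_n = d_n + m Σ_{k<n} a_k d_{n-k}`. -/
lemma aseq_rec (H : ℕ → ℕ → ℝ≥0∞) (g : ℕ → ℝ≥0∞) (m : ℝ≥0∞) (n : ℕ) :
    aseq H g m n = dseq H g n + m * ∑ k ∈ Finset.range n, aseq H g m k * dseq H g (n - k) := by
  unfold aseq
  simp_rw [vpow_meanM H g m n, mul_add, ENNReal.tsum_add]
  rw [dseq_eq]
  congr 1
  have hpt : ∀ i, g i * (m * ∑ k ∈ Finset.range n, aseq H g m k * vpow H (n - k) i)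
      = m * ∑ k ∈ Finset.range n, aseq H g m k * (g i * vpow H (n - k) i) := by
    intro i
    rw [Finset.mul_sum, Finset.mul_sum, Finset.mul_sum]
    congr 1
    ext k
    ring
  simp_rw [hpt]
  rw [ENNReal.tsum_mul_left]
  congr 1
  rw [Summable.tsum_finsetSum (fun k _ => ENNReal.summable)]
  apply Finset.sum_congr rfl
  intro k hk
  rw [ENNReal.tsum_mul_left, dseq_eq]
  rfl

lemma aseq_ne_top (H : ℕ → ℕ → ℝ≥0∞) (g : ℕ → ℝ≥0∞) (m : ℝ≥0∞)
    (hH : ∀ i, ∑' j, H i j ≤ 1) (hg : ∑' j, g j = 1) (hm' : m ≠ ⊤) :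
    ∀ n, aseq H g m n ≠ ⊤ := by
  intro n
  induction n using Nat.strong_induction_on with
  | _ n ih =>
    rw [aseq_rec]
    apply ENNReal.add_ne_top.2
    constructor
    · exact ne_top_of_le_ne_top ENNReal.one_ne_top (dseq_le_one H g hH hg n)
    · apply ENNReal.mul_ne_top hm'
      rw [← lt_top_iff_ne_top]
      apply ENNReal.sum_lt_top.2
      intro k hk
      rw [lt_top_iff_ne_top]
      exact ENNReal.mul_ne_top (ih k (Finset.mem_range.1 hk))
        (ne_top_of_le_ne_top ENNReal.one_ne_top (dseq_le_one H g hH hg _))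

/-- Cauchy product for `ℝ≥0∞`-valued series. -/
lemma enn_cauchy (x y : ℕ → ℝ≥0∞) :
    (∑' n, x n) * (∑' n, y n) = ∑' n : ℕ, ∑ k ∈ Finset.range (n + 1), x k * y (n - k) := by
  have h1 : ∑' p : ℕ × ℕ, x p.1 * y p.2 = (∑' n, x n) * (∑' n, y n) := by
    rw [ENNReal.tsum_prod (f := fun a b => x a * y b)]
    simp_rw [ENNReal.tsum_mul_left]
    rw [ENNReal.tsum_mul_right]
  rw [← h1,
    ← Equiv.tsum_eq (Finset.HasAntidiagonal.sigmaAntidiagonalEquivProd (A := ℕ)) (fun p : ℕ × ℕ => x p.1 * y p.2)]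
  simp only [Finset.HasAntidiagonal.sigmaAntidiagonalEquivProd_apply]
  rw [ENNReal.tsum_sigma
    (f := fun (n : ℕ) (p : Finset.HasAntidiagonal.antidiagonal n) => x (p : ℕ × ℕ).1 * y (p : ℕ × ℕ).2)]
  congr 1
  ext n
  rw [← Finset.Nat.sum_antidiagonal_eq_sum_range_succ (fun k l => x k * y l),
    ← Finset.tsum_subtype (Finset.HasAntidiagonal.antidiagonal n) (fun p => x p.1 * y p.2)]

theorem lf_scalar_resolvent
    (H : ℕ → ℕ → ℝ≥0∞) (g : ℕ → ℝ≥0∞) (m : ℝ≥0∞)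
    (hH : ∀ i, ∑' j, H i j ≤ 1) (hg : ∑' j, g j = 1) (hm : 0 < m) (hm' : m ≠ ⊤)
    (s : ℝ≥0∞) (hs : 0 < s) (hs' : s ≠ ⊤) (hfs : m * fgen H g s < 1) :
    (∑' n : ℕ, s ^ n * ∑' i, g i * ∑' j, matpow (meanM H g m) n i j) < ⊤ ∧
    (∑' n : ℕ, s ^ n * ∑' i, g i * ∑' j, matpow (meanM H g m) n i j)
      = (1 + fgen H g s) / (1 - m * fgen H g s) := by
  have hA : (∑' n : ℕ, s ^ n * ∑' i, g i * ∑' j, matpow (meanM H g m) n i j)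
      = ∑' n : ℕ, s ^ n * aseq H g m n := rfl
  rw [hA]
  set f := fgen H g s with hf
  set c := m * f with hc
  set b := 1 + f with hb
  set A := ∑' n : ℕ, s ^ n * aseq H g m n with hAdef
  have hc1 : c < 1 := hfs
  have hf_ne_top : f ≠ ⊤ := by
    intro h
    rw [hc, h, ENNReal.mul_top hm.ne'] at hc1
    exact absurd hc1 (by simp)
  have hb_ne_top : b ≠ ⊤ := by
    rw [hb]
    exact ENNReal.add_ne_top.2 ⟨ENNReal.one_ne_top, hf_ne_top⟩
  have hc_ne_top : c ≠ ⊤ := ENNReal.mul_ne_top hm' hf_ne_top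
  have h1c0 : (1 : ℝ≥0∞) - c ≠ 0 := by
    simpa [tsub_eq_zero_iff_le] using not_le.2 hc1
  have h1ct : (1 : ℝ≥0∞) - c ≠ ⊤ :=
    ne_top_of_le_ne_top ENNReal.one_ne_top tsub_le_self
  -- the sequences appearing in the Cauchy product
  set x : ℕ → ℝ≥0∞ := fun k => s ^ k * aseq H g m k with hx
  set y : ℕ → ℝ≥0∞ := fun k => if k = 0 then 0 else s ^ k * dseq H g k with hy
  have hy_sum : (∑' k, y k) = f := by
    rw [tsum_eq_zero_add' ENNReal.summable]
    simp only [hy, if_pos rfl, zero_add]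
    rw [hf]
    unfold fgen
    apply tsum_congr
    intro n
    simp [Nat.succ_ne_zero, mul_comm]
  have hd_sum : (∑' n : ℕ, s ^ n * dseq H g n) = b := by
    rw [tsum_eq_zero_add' ENNReal.summable]
    rw [hb, hf]
    unfold fgen
    rw [pow_zero, one_mul, dseq_zero H g hg]
    congr 1
    apply tsum_congr
    intro n
    rw [mul_comm]
  -- pointwise expansion of the terms of the series
  have key : ∀ n, s ^ n * aseq H g m n
      = s ^ n * dseq H g n + m * ∑ k ∈ Finset.range (n + 1), x k * y (n - k) := by
    intro n
    rw [aseq_rec H g m n, mul_add]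
    congr 1
    rw [Finset.sum_range_succ]
    have hy0 : y (n - n) = 0 := by simp [hy]
    rw [hy0, mul_zero, add_zero]
    have hterm : ∀ k ∈ Finset.range n, x k * y (n - k)
        = s ^ n * (aseq H g m k * dseq H g (n - k)) := by
      intro k hk
      simp only [Finset.mem_range] at hk
      have hnk : n - k ≠ 0 := by omega
      simp only [hx, hy, if_neg hnk]
      rw [show s ^ n = s ^ k * s ^ (n - k) by rw [← pow_add]; congr 1; omega]
      ring
    rw [Finset.sum_congr rfl hterm, ← Finset.mul_sum]
    ring
  -- the fixed point equation A = b + c * A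
  have hE : A = b + c * A := by
    rw [hAdef]
    calc ∑' n : ℕ, s ^ n * aseq H g m n
        = ∑' n : ℕ, (s ^ n * dseq H g n
            + m * ∑ k ∈ Finset.range (n + 1), x k * y (n - k)) := tsum_congr key
      _ = (∑' n : ℕ, s ^ n * dseq H g n)
            + m * ∑' n : ℕ, ∑ k ∈ Finset.range (n + 1), x k * y (n - k) := by
          rw [ENNReal.tsum_add, ENNReal.tsum_mul_left]
      _ = b + c * A := by
          rw [hd_sum, ← enn_cauchy, hy_sum]
          have hxA : (∑' n, x n) = A := rfl
          rw [hxA, hc]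
          ring
  -- partial sums are bounded
  have hPbound : ∀ N : ℕ, ∑ n ∈ Finset.range N, s ^ n * aseq H g m n ≤ b / (1 - c) := by
    intro N
    set P := ∑ n ∈ Finset.range N, s ^ n * aseq H g m n with hP
    have hP_ne_top : P ≠ ⊤ := by
      rw [← lt_top_iff_ne_top]
      apply ENNReal.sum_lt_top.2
      intro n _
      rw [lt_top_iff_ne_top]
      exact ENNReal.mul_ne_top (ENNReal.pow_ne_top hs') (aseq_ne_top H g m hH hg hm' n)
    set x' : ℕ → ℝ≥0∞ := fun k => if k < N then x k else 0 with hx'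
    have hx'_sum : (∑' k, x' k) = P := by
      have h0 : ∀ k ∉ Finset.range N, x' k = 0 := by
        intro k hk
        simp only [Finset.mem_range, not_lt] at hk
        simp only [hx']
        rw [if_neg (by omega)]
      rw [tsum_eq_sum h0]
      apply Finset.sum_congr rfl
      intro k hk
      simp only [Finset.mem_range] at hk
      simp [hx', hk, hx]
    have step : P ≤ b + c * P := by
      calc P = ∑ n ∈ Finset.range N, (s ^ n * dseq H g n
            + m * ∑ k ∈ Finset.range (n + 1), x k * y (n - k)) := Finset.sum_congr rfl
              (fun n _ => key n)
        _ = (∑ n ∈ Finset.range N, s ^ n * dseq H g n)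
            + m * ∑ n ∈ Finset.range N, ∑ k ∈ Finset.range (n + 1), x k * y (n - k) := by
              rw [Finset.sum_add_distrib, Finset.mul_sum]
        _ ≤ b + m * ∑' n : ℕ, ∑ k ∈ Finset.range (n + 1), x' k * y (n - k) := by
              gcongr
              · rw [← hd_sum]; exact ENNReal.sum_le_tsum _
              · calc ∑ n ∈ Finset.range N, ∑ k ∈ Finset.range (n + 1), x k * y (n - k)
                    = ∑ n ∈ Finset.range N, ∑ k ∈ Finset.range (n + 1), x' k * y (n - k) := by
                      apply Finset.sum_congr rfl
                      intro n hn
                      apply Finset.sum_congr rfl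
                      intro k hk
                      simp only [Finset.mem_range] at hn hk
                      have : k < N := by omega
                      simp [hx', this]
                  _ ≤ ∑' n : ℕ, ∑ k ∈ Finset.range (n + 1), x' k * y (n - k) :=
                      ENNReal.sum_le_tsum _
        _ = b + c * P := by
              rw [← enn_cauchy, hx'_sum, hy_sum, hc]
              ring
    rw [ENNReal.le_div_iff_mul_le (Or.inl h1c0) (Or.inl h1ct)]
    have hmulsub : P * (1 - c) = P - P * c := by
      rw [ENNReal.mul_sub (fun _ _ => hP_ne_top), mul_one]
    rw [hmulsub]
    rw [tsub_le_iff_right]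
    calc P ≤ b + c * P := step
      _ = b + P * c := by ring
  have hA_le : A ≤ b / (1 - c) :=
    Summable.tsum_le_of_sum_range_le ENNReal.summable hPbound
  have hA_ne_top : A ≠ ⊤ :=
    ne_top_of_le_ne_top (ENNReal.div_lt_top hb_ne_top h1c0).ne hA_le
  constructor
  · exact lt_top_iff_ne_top.2 hA_ne_top
  · rw [ENNReal.eq_div_iff h1c0 h1ct]
    have : A - c * A = b :=
      ENNReal.sub_eq_of_eq_add (ENNReal.mul_ne_top hc_ne_top hA_ne_top) hE
    rw [← this, ENNReal.sub_mul (fun _ _ => hA_ne_top), one_mul]
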